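/- arXiv:math/0302225 — 3 statements merged into one kernel-verified Lean document; each statement's English description precedes it below -/
import Mathlib

section
/- Let n ≥ 5 be odd. An n-tuple ρ of transpositions of S_4 lies in C^n and satisfies μ(ρ) = (2 3) if and only if exactly one of the following holds: (i) ρ_{n−1} = (2 3) and the truncated tuple (ρ_0,…,ρ_{n−2}) either lies in C^{n−1} with μ((ρ_0,…,ρ_{n−2})) = id, or equals the tuple ρ̃_∅^{n−1} = ((1 2),(1 2),(1 4),…,(1 4)); (ii) ρ_{n−1} = (1 4) and (ρ_0,…,ρ_{n−2}) lies in C^{n−1} with μ((ρ_0,…,ρ_{n−2})) = (1 4)(2 3). -/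
open Equiv

/-- The braid relations on generators `β_0, …, β_{n-2}` (indexed by `Fin (n-1)`). -/
def braidRels (n : ℕ) : Set (FreeGroup (Fin (n - 1))) :=
  {r | (∃ i j : Fin (n - 1), (i : ℕ) + 2 ≤ (j : ℕ) ∧
          r = FreeGroup.of i * FreeGroup.of j * (FreeGroup.of i)⁻¹ * (FreeGroup.of j)⁻¹) ∨
       (∃ i j : Fin (n - 1), (i : ℕ) + 1 = (j : ℕ) ∧
          r = FreeGroup.of i * FreeGroup.of j * FreeGroup.of i *
              (FreeGroup.of j * FreeGroup.of i * FreeGroup.of j)⁻¹)}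

/-- The braid group `B_n` on `n` strands, presented by the Artin generators and relations. -/
def BraidGroup (n : ℕ) : Type := PresentedGroup (braidRels n)

instance (n : ℕ) : Group (BraidGroup n) :=
  inferInstanceAs (Group (PresentedGroup (braidRels n)))

/-- The Artin generator `β_i` of the braid group. -/
def braidGen (n : ℕ) (i : Fin (n - 1)) : BraidGroup n := PresentedGroup.of i

/-- The `i`-th Hurwitz twist `T_i` on `n`-tuples of elements of a group `G`. -/
def hurwitzTwist {G : Type*} [Group G] {n : ℕ} (i : Fin (n - 1)) (ρ : Fin n → G) :
    Fin n → G := fun k =>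
  if (k : ℕ) = (i : ℕ) then
    ρ k * ρ ⟨(i : ℕ) + 1, by have := i.isLt; omega⟩ * (ρ k)⁻¹
  else if (k : ℕ) = (i : ℕ) + 1 then
    ρ ⟨(i : ℕ), by have := i.isLt; omega⟩
  else ρ k

/-- `act` is a right action of `B_n` on `G^n` in which `β_i` acts by the Hurwitz twist `T_i`.
(Such an action exists and is unique.) -/
def IsHurwitzAction {G : Type*} [Group G] {n : ℕ}
    (act : (Fin n → G) → BraidGroup n → (Fin n → G)) : Prop :=
  (∀ ρ, act ρ 1 = ρ) ∧
  (∀ ρ a b, act ρ (a * b) = act (act ρ a) b) ∧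
  (∀ ρ (i : Fin (n - 1)), act ρ (braidGen n i) = hurwitzTwist i ρ)

/-- The ordered product `ρ_0 ρ_1 ⋯ ρ_{n-1}` of the entries of a tuple (boundary monodromy). -/
def tupleProd {G : Type*} [Monoid G] {n : ℕ} (ρ : Fin n → G) : G :=
  (List.ofFn ρ).prod

/-- The standard 3-fold covering `ρ^n(3) = ((1 2),(1 2),(2 3),…,(2 3))`. -/
def rho3 (n : ℕ) : Fin n → Perm (Fin 3) :=
  fun i => if (i : ℕ) < 2 then Equiv.swap 0 1 else Equiv.swap 1 2

/-- `C^n`: tuples of transpositions of `S_4` with first two entries `(1 2)`, the others in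
`{(2 3), (1 4)}`, whose entries generate `S_4`. -/
def Cset (n : ℕ) : Set (Fin n → Perm (Fin 4)) :=
  {ρ | (∀ i : Fin n, (i : ℕ) < 2 → ρ i = Equiv.swap 0 1) ∧
       (∀ i : Fin n, 2 ≤ (i : ℕ) → ρ i = Equiv.swap 1 2 ∨ ρ i = Equiv.swap 0 3) ∧
       Subgroup.closure (Set.range ρ) = ⊤}

open scoped Classical in
/-- The tuple `ρ_I^n`. -/
noncomputable def rhoI (n : ℕ) (I : Set ℕ) : Fin n → Perm (Fin 4) := fun i =>
  if (i : ℕ) < 2 then Equiv.swap 0 1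
  else if (i : ℕ) ∈ I then Equiv.swap 0 3
  else Equiv.swap 1 2

open scoped Classical in
/-- The tuple `ρ̃_I^n`. -/
noncomputable def rhoTilde (n : ℕ) (I : Set ℕ) : Fin n → Perm (Fin 4) := fun i =>
  if (i : ℕ) < 2 then Equiv.swap 0 1
  else if (i : ℕ) ∈ I then Equiv.swap 1 2
  else Equiv.swap 0 3

/-- The braid `γ = β_3 β_2 β_1² β_2 β_3² β_2 β_1`. -/
def gammaBraid (n : ℕ) (hn : 6 ≤ n) : BraidGroup n :=
  braidGen n ⟨3, by omega⟩ * braidGen n ⟨2, by omega⟩ * (braidGen n ⟨1, by omega⟩) ^ 2 *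
    braidGen n ⟨2, by omega⟩ * (braidGen n ⟨3, by omega⟩) ^ 2 * braidGen n ⟨2, by omega⟩ *
    braidGen n ⟨1, by omega⟩

/-- The braid `δ_4 = γ⁻¹ β_4 γ`. -/
def delta4 (n : ℕ) (hn : 6 ≤ n) : BraidGroup n :=
  (gammaBraid n hn)⁻¹ * braidGen n ⟨4, by omega⟩ * gammaBraid n hn

/-- The braid `η = β_5⁻¹ β_4⁻¹ β_3⁻¹ β_2⁻¹ β_6⁻¹ β_5⁻¹ β_4⁻¹ β_3⁻¹`. -/
def etaBraid (n : ℕ) (hn : 8 ≤ n) : BraidGroup n :=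
  (braidGen n ⟨5, by omega⟩)⁻¹ * (braidGen n ⟨4, by omega⟩)⁻¹ * (braidGen n ⟨3, by omega⟩)⁻¹ *
    (braidGen n ⟨2, by omega⟩)⁻¹ * (braidGen n ⟨6, by omega⟩)⁻¹ * (braidGen n ⟨5, by omega⟩)⁻¹ *
    (braidGen n ⟨4, by omega⟩)⁻¹ * (braidGen n ⟨3, by omega⟩)⁻¹

/-- The braid `δ_6 = η⁻¹ δ_4 η`. -/
def delta6 (n : ℕ) (hn : 8 ≤ n) : BraidGroup n :=
  (etaBraid n hn)⁻¹ * delta4 n (by omega) * etaBraid n hn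

/-- The product `β_a β_{a+1} ⋯ β_b` of consecutive Artin generators. -/
def betaChain (n a b : ℕ) (h : b < n - 1) : BraidGroup n :=
  (List.ofFn (fun k : Fin (b + 1 - a) =>
    braidGen n ⟨a + (k : ℕ), by have := k.isLt; omega⟩)).prod

/-- The elementary `M` move relative to the tuple `ρ`: inserting or deleting `β_i^3` at a
position where the two colors at `i, i+1` are non-commuting (interacting) transpositions. -/
def mMove {α : Type*} [DecidableEq α] {n : ℕ}
    (act : (Fin n → Perm α) → BraidGroup n → (Fin n → Perm α))
    (ρ : Fin n → Perm α) (x y : BraidGroup n) : Prop :=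
  ∃ g h : BraidGroup n, ∃ i : Fin (n - 1),
    (act ρ g ⟨(i : ℕ), by have := i.isLt; omega⟩).IsSwap ∧
    (act ρ g ⟨(i : ℕ) + 1, by have := i.isLt; omega⟩).IsSwap ∧
    act ρ g ⟨(i : ℕ), by have := i.isLt; omega⟩ *
        act ρ g ⟨(i : ℕ) + 1, by have := i.isLt; omega⟩ ≠
      act ρ g ⟨(i : ℕ) + 1, by have := i.isLt; omega⟩ *
        act ρ g ⟨(i : ℕ), by have := i.isLt; omega⟩ ∧
    x = g * braidGen n i ^ 3 * h ∧ y = g * h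

/-- The elementary `P` move relative to the tuple `ρ`: inserting or deleting `β_i^2` at a
position where the two colors at `i, i+1` are distinct commuting (disjoint) transpositions. -/
def pMove {α : Type*} [DecidableEq α] {n : ℕ}
    (act : (Fin n → Perm α) → BraidGroup n → (Fin n → Perm α))
    (ρ : Fin n → Perm α) (x y : BraidGroup n) : Prop :=
  ∃ g h : BraidGroup n, ∃ i : Fin (n - 1),
    (act ρ g ⟨(i : ℕ), by have := i.isLt; omega⟩).IsSwap ∧
    (act ρ g ⟨(i : ℕ) + 1, by have := i.isLt; omega⟩).IsSwap ∧
    act ρ g ⟨(i : ℕ), by have := i.isLt; omega⟩ ≠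
      act ρ g ⟨(i : ℕ) + 1, by have := i.isLt; omega⟩ ∧
    act ρ g ⟨(i : ℕ), by have := i.isLt; omega⟩ *
        act ρ g ⟨(i : ℕ) + 1, by have := i.isLt; omega⟩ =
      act ρ g ⟨(i : ℕ) + 1, by have := i.isLt; omega⟩ *
        act ρ g ⟨(i : ℕ), by have := i.isLt; omega⟩ ∧
    x = g * braidGen n i ^ 2 * h ∧ y = g * h

/-- MP-equivalence relative to `ρ`: the equivalence relation on `B_n` generated by the
`M` and `P` moves. -/
def mpEquiv {α : Type*} [DecidableEq α] {n : ℕ}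
    (act : (Fin n → Perm α) → BraidGroup n → (Fin n → Perm α))
    (ρ : Fin n → Perm α) : BraidGroup n → BraidGroup n → Prop :=
  Relation.EqvGen (fun x y => mMove act ρ x y ∨ pMove act ρ x y)

/-- `N(ρ)`: the set of braids MP-equivalent to the identity relative to `ρ`. -/
def Nset {α : Type*} [DecidableEq α] {n : ℕ}
    (act : (Fin n → Perm α) → BraidGroup n → (Fin n → Perm α))
    (ρ : Fin n → Perm α) : Set (BraidGroup n) :=
  {b | mpEquiv act ρ b 1}


section StmtSixAux

private lemma tupleProd_snoc' {G : Type*} [Monoid G] {m : ℕ} (f : Fin (m+1) → G) :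
    tupleProd f
      = tupleProd (fun i : Fin m => f (Fin.castLE (Nat.le_succ m) i)) * f (Fin.last m) := by
  unfold tupleProd
  rw [List.ofFn_succ', List.concat_eq_append, List.prod_append]
  simp [Fin.castSucc, Fin.castAdd, Fin.castLE]

private lemma tupleProd_tail' {G : Type*} [Monoid G] {m : ℕ} (hm : 2 ≤ m) (f : Fin m → G)
    (a g : G) (h1 : ∀ i : Fin m, (i:ℕ) < 2 → f i = a)
    (h2 : ∀ i : Fin m, 2 ≤ (i:ℕ) → f i = g) :
    tupleProd f = a * a * g ^ (m - 2) := by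
  obtain ⟨k, rfl⟩ : ∃ k, m = k + 2 := ⟨m - 2, by omega⟩
  unfold tupleProd
  rw [List.ofFn_succ, List.ofFn_succ]
  have e : (List.ofFn fun i : Fin k => f i.succ.succ) = List.replicate k g := by
    rw [show (fun i : Fin k => f i.succ.succ) = fun _ => g from
      funext fun i => h2 _ (by simp), List.ofFn_const]
  rw [e]
  simp [h1 0 (by simp), h1 1 (by simp), List.prod_replicate, mul_assoc]

private def fixSub (p : Fin 4) : Subgroup (Perm (Fin 4)) where
  carrier := {σ | σ p = p}
  one_mem' := rfl
  mul_mem' := by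
    intro a b ha hb
    simp only [Set.mem_setOf_eq, Perm.mul_apply] at *
    rw [hb, ha]
  inv_mem' := by
    intro a ha
    simp only [Set.mem_setOf_eq] at *
    conv_lhs => rw [← ha]
    exact a.symm_apply_apply p

private lemma closure_le_fix' {s : Set (Perm (Fin 4))} {p : Fin 4} (hs : ∀ σ ∈ s, σ p = p) :
    Subgroup.closure s ≠ ⊤ := by
  intro h
  have h2 : Subgroup.closure s ≤ fixSub p := (Subgroup.closure_le _).2 hs
  have h3 : ∀ σ : Perm (Fin 4), σ p = p := fun σ => h2 (h ▸ Subgroup.mem_top σ)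
  have h4 := h3 (Equiv.swap p (p + 1))
  rw [Equiv.swap_apply_left] at h4
  revert h4; fin_cases p <;> decide

private lemma closure_three' :
    Subgroup.closure ({swap 0 1, swap 1 2, swap 0 3} : Set (Perm (Fin 4))) = ⊤ := by
  set S : Set (Perm (Fin 4)) := {swap 0 1, swap 1 2, swap 0 3}
  have h1 : swap (0:Fin 4) 1 ∈ Subgroup.closure S := Subgroup.subset_closure (by simp [S])
  have h2 : swap (1:Fin 4) 2 ∈ Subgroup.closure S := Subgroup.subset_closure (by simp [S])
  have h3 : swap (0:Fin 4) 3 ∈ Subgroup.closure S := Subgroup.subset_closure (by simp [S])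
  have h02 : swap (0:Fin 4) 2 ∈ Subgroup.closure S := by
    rw [show swap (0:Fin 4) 2 = swap 0 1 * swap 1 2 * swap 0 1 from by decide]
    exact mul_mem (mul_mem h1 h2) h1
  have h13 : swap (1:Fin 4) 3 ∈ Subgroup.closure S := by
    rw [show swap (1:Fin 4) 3 = swap 0 1 * swap 0 3 * swap 0 1 from by decide]
    exact mul_mem (mul_mem h1 h3) h1
  have h23 : swap (2:Fin 4) 3 ∈ Subgroup.closure S := by
    rw [show swap (2:Fin 4) 3 = swap 1 2 * swap 1 3 * swap 1 2 from by decide]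
    exact mul_mem (mul_mem h2 h13) h2
  rw [eq_top_iff, ← Equiv.Perm.closure_isSwap]
  apply (Subgroup.closure_le _).2
  rintro σ ⟨a, b, hab, rfl⟩
  fin_cases a <;> fin_cases b <;> simp_all <;>
    first
      | exact h1 | exact h2 | exact h3 | exact h02 | exact h13 | exact h23
      | (rw [Equiv.swap_comm];
         first | exact h1 | exact h2 | exact h3 | exact h02 | exact h13 | exact h23)

private lemma rhoTilde_empty_apply (m : ℕ) (j : Fin m) :
    rhoTilde m ∅ j = if (j:ℕ) < 2 then swap 0 1 else swap 0 3 := by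
  simp [rhoTilde]

end StmtSixAux

/-- Decomposition of `C^n_{(2 3)}` for odd `n`: a tuple of transpositions lies in `C^n` with
boundary monodromy `(2 3)` iff exactly one of: its last entry is `(2 3)` and its truncation
lies in `C^{n-1}_{id}` or equals `ρ̃_∅^{n-1}`, or its last entry is `(1 4)` and its
truncation lies in `C^{n-1}_{(1 4)(2 3)}`. -/
theorem stmt6 (n : ℕ) (hn : 5 ≤ n) (hodd : Odd n)
    (ρ : Fin n → Perm (Fin 4)) (hsw : ∀ i, (ρ i).IsSwap) :
    (ρ ∈ Cset n ∧ tupleProd ρ = Equiv.swap 1 2) ↔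
      Xor'
        (ρ ⟨n - 1, by omega⟩ = Equiv.swap 1 2 ∧
          (((fun i : Fin (n - 1) => ρ (Fin.castLE (by omega) i)) ∈ Cset (n - 1) ∧
              tupleProd (fun i : Fin (n - 1) => ρ (Fin.castLE (by omega) i)) = 1) ∨
            (fun i : Fin (n - 1) => ρ (Fin.castLE (by omega) i)) = rhoTilde (n - 1) ∅))
        (ρ ⟨n - 1, by omega⟩ = Equiv.swap 0 3 ∧
          (fun i : Fin (n - 1) => ρ (Fin.castLE (by omega) i)) ∈ Cset (n - 1) ∧
          tupleProd (fun i : Fin (n - 1) => ρ (Fin.castLE (by omega) i)) =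
            Equiv.swap 0 3 * Equiv.swap 1 2) := by
  obtain ⟨m, rfl⟩ : ∃ m, n = m + 1 := ⟨n - 1, by omega⟩
  have hm : 4 ≤ m := by omega
  have hev : Even (m - 2) := by
    rcases hodd with ⟨k, hk⟩; exact ⟨k - 1, by omega⟩
  have hpow12 : swap (1:Fin 4) 2 ^ (m - 2) = 1 := by
    obtain ⟨r, hr⟩ := hev
    rw [hr, ← two_mul, pow_mul, show swap (1:Fin 4) 2 ^ 2 = 1 from by decide, one_pow]
  have hpow03 : swap (0:Fin 4) 3 ^ (m - 2) = 1 := by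
    obtain ⟨r, hr⟩ := hev
    rw [hr, ← two_mul, pow_mul, show swap (0:Fin 4) 3 ^ 2 = 1 from by decide, one_pow]
  have hsplit := tupleProd_snoc' ρ
  constructor
  · rintro ⟨⟨hc1, hc2, hgen⟩, hprod⟩
    rw [hsplit] at hprod
    have hlast : ρ (Fin.last m) = swap 1 2 ∨ ρ (Fin.last m) = swap 0 3 :=
      hc2 (Fin.last m) (by exact (by omega : 2 ≤ m))
    have hex03 : ∃ j : Fin (m+1), 2 ≤ (j:ℕ) ∧ ρ j = swap 0 3 := by
      by_contra hno; push_neg at hno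
      refine closure_le_fix' (p := 3) ?_ hgen
      rintro σ ⟨i, rfl⟩
      rcases lt_or_ge ((i:ℕ)) 2 with hi | hi
      · rw [hc1 i hi]; decide
      · rcases hc2 i hi with h | h
        · rw [h]; decide
        · exact absurd h (hno i hi)
    have hex12 : ∃ j : Fin (m+1), 2 ≤ (j:ℕ) ∧ ρ j = swap 1 2 := by
      by_contra hno; push_neg at hno
      refine closure_le_fix' (p := 2) ?_ hgen
      rintro σ ⟨i, rfl⟩
      rcases lt_or_ge ((i:ℕ)) 2 with hi | hi
      · rw [hc1 i hi]; decide
      · rcases hc2 i hi with h | h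
        · exact absurd h (hno i hi)
        · rw [h]; decide
    rcases hlast with h12 | h03
    · left
      rw [h12] at hprod
      have hp1 : tupleProd (fun i : Fin m => ρ (Fin.castLE (Nat.le_succ m) i)) = 1 :=
        mul_right_cancel (hprod.trans (one_mul (swap (1:Fin 4) 2)).symm)
      refine ⟨⟨h12, ?_⟩, ?_⟩
      · by_cases hex : ∃ i : Fin (m+1), 2 ≤ (i:ℕ) ∧ (i:ℕ) < m ∧ ρ i = swap 1 2
        · left
          obtain ⟨j03, hj03a, hj03b⟩ := hex03
          have hj03m : (j03:ℕ) < m := by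
            rcases lt_or_ge ((j03:ℕ)) m with h | h
            · exact h
            · exfalso
              have hj : j03 = Fin.last m := by
                apply Fin.ext; simp only [Fin.val_last]
                have := j03.isLt; omega
              rw [hj, h12] at hj03b
              exact absurd hj03b (by decide)
          obtain ⟨j12, hj12a, hj12m, hj12b⟩ := hex
          refine ⟨⟨?_, ?_, ?_⟩, hp1⟩
          · intro i hi; exact hc1 (Fin.castLE (by omega) i) hi
          · intro i hi; exact hc2 (Fin.castLE (by omega) i) hi
          · rw [eq_top_iff, ← closure_three']
            refine (Subgroup.closure_le _).2 ?_
            rintro σ hσ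
            simp only [Set.mem_insert_iff, Set.mem_singleton_iff] at hσ
            rcases hσ with rfl | rfl | rfl
            · exact Subgroup.subset_closure
                ⟨⟨0, by omega⟩, hc1 ⟨0, by omega⟩ (by exact (by omega : (0:ℕ) < 2))⟩
            · exact Subgroup.subset_closure ⟨⟨(j12:ℕ), by omega⟩, hj12b⟩
            · exact Subgroup.subset_closure ⟨⟨(j03:ℕ), by omega⟩, hj03b⟩
        · right
          push_neg at hex
          funext i
          have him : (i:ℕ) < m := i.isLt
          rw [rhoTilde_empty_apply]
          rcases lt_or_ge ((i:ℕ)) 2 with hi | hi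
          · rw [if_pos hi]; exact hc1 (Fin.castLE (by omega) i) hi
          · rw [if_neg (by omega)]
            rcases hc2 (Fin.castLE (by omega) i) hi with h | h
            · exact absurd h (hex (Fin.castLE (by omega) i) hi him)
            · exact h
      · rintro ⟨hB1, -⟩
        exact absurd (h12.symm.trans hB1) (by decide)
    · right
      rw [h03] at hprod
      have hp2 : tupleProd (fun i : Fin m => ρ (Fin.castLE (Nat.le_succ m) i))
          = swap 0 3 * swap 1 2 := by
        have h' := eq_mul_inv_of_mul_eq hprod
        rwa [show (swap (1:Fin 4) 2) * (swap (0:Fin 4) 3)⁻¹ = swap 0 3 * swap 1 2 from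
          by decide] at h'
      obtain ⟨j12, hj12a, hj12b⟩ := hex12
      have hj12m : (j12:ℕ) < m := by
        rcases lt_or_ge ((j12:ℕ)) m with h | h
        · exact h
        · exfalso
          have hj : j12 = Fin.last m := by
            apply Fin.ext; simp only [Fin.val_last]
            have := j12.isLt; omega
          rw [hj, h03] at hj12b
          exact absurd hj12b (by decide)
      have hex03' : ∃ j : Fin (m+1), 2 ≤ (j:ℕ) ∧ (j:ℕ) < m ∧ ρ j = swap 0 3 := by
        by_contra hno; push_neg at hno
        have ht : tupleProd (fun i : Fin m => ρ (Fin.castLE (Nat.le_succ m) i))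
            = swap 0 1 * swap 0 1 * swap 1 2 ^ (m - 2) := by
          refine tupleProd_tail' (by omega) _ _ _ ?_ ?_
          · intro i hi; exact hc1 (Fin.castLE (Nat.le_succ m) i) hi
          · intro i hi
            rcases hc2 (Fin.castLE (Nat.le_succ m) i) hi with h | h
            · exact h
            · exact absurd h (hno (Fin.castLE (Nat.le_succ m) i) hi (by exact i.isLt))
        rw [hpow12] at ht
        have := hp2.symm.trans ht
        exact absurd this (by decide)
      obtain ⟨j03, hj03a, hj03m, hj03b⟩ := hex03'
      refine ⟨⟨h03, ⟨?_, ?_, ?_⟩, hp2⟩, ?_⟩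
      · intro i hi; exact hc1 (Fin.castLE (by omega) i) hi
      · intro i hi; exact hc2 (Fin.castLE (by omega) i) hi
      · rw [eq_top_iff, ← closure_three']
        refine (Subgroup.closure_le _).2 ?_
        rintro σ hσ
        simp only [Set.mem_insert_iff, Set.mem_singleton_iff] at hσ
        rcases hσ with rfl | rfl | rfl
        · exact Subgroup.subset_closure
            ⟨⟨0, by omega⟩, hc1 ⟨0, by omega⟩ (by exact (by omega : (0:ℕ) < 2))⟩
        · exact Subgroup.subset_closure ⟨⟨(j12:ℕ), by omega⟩, hj12b⟩
        · exact Subgroup.subset_closure ⟨⟨(j03:ℕ), by omega⟩, hj03b⟩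
      · rintro ⟨hA1, -⟩
        exact absurd (h03.symm.trans hA1) (by decide)
  · rintro (⟨⟨hl, hrest⟩, -⟩ | ⟨⟨hl, hC, hp⟩, -⟩)
    · have hl' : ρ (Fin.last m) = swap 1 2 := hl
      rcases hrest with ⟨⟨hc1, hc2, hgen⟩, hp⟩ | htil
      · have hp' : tupleProd (fun i : Fin m => ρ (Fin.castLE (Nat.le_succ m) i)) = 1 := hp
        refine ⟨⟨?_, ?_, ?_⟩, ?_⟩
        · intro i hi
          exact hc1 ⟨(i:ℕ), by omega⟩ hi
        · intro i hi
          by_cases him : (i:ℕ) = m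
          · left
            rw [show i = Fin.last m from Fin.ext (by simp only [Fin.val_last]; omega)]
            exact hl'
          · have hlt : (i:ℕ) < m := by have := i.isLt; omega
            exact hc2 ⟨(i:ℕ), by omega⟩ hi
        · rw [eq_top_iff, ← hgen]
          refine Subgroup.closure_mono ?_
          rintro σ ⟨j, rfl⟩
          exact ⟨Fin.castLE (by omega) j, rfl⟩
        · rw [tupleProd_snoc' ρ, hp', hl', one_mul]
      · have htil' : ∀ j : Fin m, ρ (Fin.castLE (Nat.le_succ m) j) = rhoTilde m ∅ j :=
          fun j => congrFun htil j
        have hent : ∀ j : Fin (m+1), (j:ℕ) < m →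
            ρ j = if (j:ℕ) < 2 then swap 0 1 else swap 0 3 := by
          intro j hj
          have h := htil' ⟨(j:ℕ), hj⟩
          rw [rhoTilde_empty_apply] at h
          exact h
        refine ⟨⟨?_, ?_, ?_⟩, ?_⟩
        · intro i hi
          rw [hent i (by omega), if_pos hi]
        · intro i hi
          by_cases him : (i:ℕ) = m
          · left
            rw [show i = Fin.last m from Fin.ext (by simp only [Fin.val_last]; omega)]
            exact hl'
          · right
            rw [hent i (by have := i.isLt; omega), if_neg (by omega)]
        · rw [eq_top_iff, ← closure_three']
          refine (Subgroup.closure_le _).2 ?_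
          rintro σ hσ
          simp only [Set.mem_insert_iff, Set.mem_singleton_iff] at hσ
          rcases hσ with rfl | rfl | rfl
          · refine Subgroup.subset_closure ⟨⟨0, by omega⟩, ?_⟩
            rw [hent ⟨0, by omega⟩ (by exact (by omega : (0:ℕ) < m))]
            exact if_pos (by exact (by omega : (0:ℕ) < 2))
          · exact Subgroup.subset_closure ⟨Fin.last m, hl'⟩
          · refine Subgroup.subset_closure ⟨⟨2, by omega⟩, ?_⟩
            rw [hent ⟨2, by omega⟩ (by exact (by omega : (2:ℕ) < m))]
            exact if_neg (by exact (by omega : ¬ (2:ℕ) < 2))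
        · rw [tupleProd_snoc' ρ, hl']
          have h1 : tupleProd (fun i : Fin m => ρ (Fin.castLE (Nat.le_succ m) i))
              = swap 0 1 * swap 0 1 * swap 0 3 ^ (m - 2) := by
            refine tupleProd_tail' (by omega) _ _ _ ?_ ?_
            · intro i hi
              exact (htil' i).trans (by rw [rhoTilde_empty_apply]; exact if_pos hi)
            · intro i hi
              exact (htil' i).trans (by rw [rhoTilde_empty_apply]; exact if_neg (by omega))
          rw [h1, hpow03, show swap (0:Fin 4) 1 * swap 0 1 * 1 = 1 from by decide, one_mul]
    · have hl' : ρ (Fin.last m) = swap 0 3 := hl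
      obtain ⟨hc1, hc2, hgen⟩ := hC
      have hp' : tupleProd (fun i : Fin m => ρ (Fin.castLE (Nat.le_succ m) i))
          = swap 0 3 * swap 1 2 := hp
      refine ⟨⟨?_, ?_, ?_⟩, ?_⟩
      · intro i hi
        exact hc1 ⟨(i:ℕ), by omega⟩ hi
      · intro i hi
        by_cases him : (i:ℕ) = m
        · right
          rw [show i = Fin.last m from Fin.ext (by simp only [Fin.val_last]; omega)]
          exact hl'
        · have hlt : (i:ℕ) < m := by have := i.isLt; omega
          exact hc2 ⟨(i:ℕ), by omega⟩ hi
      · rw [eq_top_iff, ← hgen]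
        refine Subgroup.closure_mono ?_
        rintro σ ⟨j, rfl⟩
        exact ⟨Fin.castLE (by omega) j, rfl⟩
      · rw [tupleProd_snoc' ρ, hp', hl',
          show swap (0:Fin 4) 3 * swap 1 2 * swap 0 3 = swap 1 2 from by decide]
end

section
/- Let α be a type, n ≥ 2, and ρ an n-tuple of permutations of α. If for some 0 ≤ i ≤ n−2 the entries ρ_i and ρ_{i+1} are transpositions (swaps of two distinct points) that do not commute, then applying the i-th Hurwitz twist three times returns the original tuple: T_i(T_i(T_i(ρ))) = ρ. (This is the combinatorial content of the local move M: the braid β_i^3 acts trivially on such colorings.) -/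
open Equiv

theorem swapBraidAux {α : Type*} [DecidableEq α] {a b : Perm α}
    (h1 : a.IsSwap) (h2 : b.IsSwap) (hnc : a * b ≠ b * a) : a * b * a = b * a * b := by
  obtain ⟨x, y, hxy, rfl⟩ := h1
  obtain ⟨z, w, hzw, rfl⟩ := h2
  have L : Equiv.swap x y * Equiv.swap z w * Equiv.swap x y
      = Equiv.swap (Equiv.swap x y z) (Equiv.swap x y w) := by
    rw [mul_swap_eq_swap_mul (Equiv.swap x y) z w, mul_swap_mul_self]
  have R : Equiv.swap z w * Equiv.swap x y * Equiv.swap z w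
      = Equiv.swap (Equiv.swap z w x) (Equiv.swap z w y) := by
    rw [mul_swap_eq_swap_mul (Equiv.swap z w) x y, mul_swap_mul_self]
  rw [L, R]
  rcases eq_or_ne x z with rfl | hxz
  · rcases eq_or_ne y w with rfl | hyw
    · exact absurd rfl hnc
    · have hwx : w ≠ x := fun h => hzw h.symm
      rw [Equiv.swap_apply_left, Equiv.swap_apply_of_ne_of_ne hwx hyw.symm,
        Equiv.swap_apply_left, Equiv.swap_apply_of_ne_of_ne hxy.symm hyw,
        Equiv.swap_comm]
  · rcases eq_or_ne x w with rfl | hxw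
    · rcases eq_or_ne y z with rfl | hyz
      · exact absurd (by rw [Equiv.swap_comm]) hnc
      · rw [Equiv.swap_apply_of_ne_of_ne hxz.symm hyz.symm,
          Equiv.swap_apply_left, Equiv.swap_apply_right,
          Equiv.swap_apply_of_ne_of_ne hyz hxy.symm]
    · rcases eq_or_ne y z with rfl | hyz
      · rw [Equiv.swap_apply_right, Equiv.swap_apply_of_ne_of_ne hxw.symm hzw.symm,
          Equiv.swap_apply_of_ne_of_ne hxy hxw, Equiv.swap_apply_left]
      · rcases eq_or_ne y w with rfl | hyw
        · rw [Equiv.swap_apply_of_ne_of_ne hxz.symm hzw, Equiv.swap_apply_right,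
            Equiv.swap_apply_of_ne_of_ne hxz hxy, Equiv.swap_apply_right,
            Equiv.swap_comm]
        · exfalso
          apply hnc
          have hd : (Equiv.swap x y).Disjoint (Equiv.swap z w) := by
            intro t
            rcases eq_or_ne t z with rfl | htz
            · exact Or.inl (Equiv.swap_apply_of_ne_of_ne (Ne.symm hxz) (Ne.symm hyz))
            · rcases eq_or_ne t w with rfl | htw
              · exact Or.inl (Equiv.swap_apply_of_ne_of_ne (Ne.symm hxw) (Ne.symm hyw))
              · exact Or.inr (Equiv.swap_apply_of_ne_of_ne htz htw)
          exact hd.commute.eq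

theorem hurwitzTwist_at_i {G : Type*} [Group G] {n : ℕ} (i : Fin (n - 1)) (ρ : Fin n → G) :
    hurwitzTwist i ρ ⟨(i : ℕ), by have := i.isLt; omega⟩ =
      ρ ⟨(i : ℕ), by have := i.isLt; omega⟩ * ρ ⟨(i : ℕ) + 1, by have := i.isLt; omega⟩ *
        (ρ ⟨(i : ℕ), by have := i.isLt; omega⟩)⁻¹ := by
  simp [hurwitzTwist]

theorem hurwitzTwist_at_i1 {G : Type*} [Group G] {n : ℕ} (i : Fin (n - 1)) (ρ : Fin n → G) :
    hurwitzTwist i ρ ⟨(i : ℕ) + 1, by have := i.isLt; omega⟩ =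
      ρ ⟨(i : ℕ), by have := i.isLt; omega⟩ := by
  simp [hurwitzTwist]

theorem hurwitzTwist_at_other {G : Type*} [Group G] {n : ℕ} (i : Fin (n - 1)) (ρ : Fin n → G)
    (k : Fin n) (h : (k : ℕ) ≠ (i : ℕ)) (h' : (k : ℕ) ≠ (i : ℕ) + 1) :
    hurwitzTwist i ρ k = ρ k := by
  simp [hurwitzTwist, h, h']

/-- Combinatorial content of the local move `M`: if the entries at positions `i` and `i+1`
are non-commuting transpositions, then the `i`-th Hurwitz twist has order dividing 3 at
that tuple. -/
theorem stmt15 (α : Type*) [DecidableEq α] (n : ℕ) (hn : 2 ≤ n)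
    (ρ : Fin n → Perm α) (i : Fin (n - 1))
    (h1 : (ρ ⟨(i : ℕ), by have := i.isLt; omega⟩).IsSwap)
    (h2 : (ρ ⟨(i : ℕ) + 1, by have := i.isLt; omega⟩).IsSwap)
    (hnc : ρ ⟨(i : ℕ), by have := i.isLt; omega⟩ *
        ρ ⟨(i : ℕ) + 1, by have := i.isLt; omega⟩ ≠
      ρ ⟨(i : ℕ) + 1, by have := i.isLt; omega⟩ *
        ρ ⟨(i : ℕ), by have := i.isLt; omega⟩) :
    hurwitzTwist i (hurwitzTwist i (hurwitzTwist i ρ)) = ρ := by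
  set a := ρ ⟨(i : ℕ), by have := i.isLt; omega⟩ with haa
  set b := ρ ⟨(i : ℕ) + 1, by have := i.isLt; omega⟩ with hbb
  have hbr : a * b * a = b * a * b := swapBraidAux h1 h2 hnc
  obtain ⟨x, y, hxy, hax⟩ := h1
  have ha : a * a = 1 := by rw [hax]; exact Equiv.swap_mul_self x y
  obtain ⟨z, w, hzw, hbz⟩ := h2
  have hb : b * b = 1 := by rw [hbz]; exact Equiv.swap_mul_self z w
  have ainv : a⁻¹ = a := inv_eq_of_mul_eq_one_left ha
  have binv : b⁻¹ = b := inv_eq_of_mul_eq_one_left hb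
  have ha' : ∀ g : Perm α, a * (a * g) = g := fun g => by rw [← mul_assoc, ha, one_mul]
  have hb' : ∀ g : Perm α, b * (b * g) = g := fun g => by rw [← mul_assoc, hb, one_mul]
  have hbr' : a * (b * a) = b * (a * b) := by
    simpa only [mul_assoc] using hbr
  have F1 : a * b * a⁻¹ * a * (a * b * a⁻¹)⁻¹ = b := by
    rw [ainv, mul_inv_rev, mul_inv_rev, ainv, binv]
    simp only [mul_assoc]
    rw [ha', hbr', hb', ha']
  have F2 : b * (a * b * a⁻¹) * b⁻¹ = a := by
    rw [ainv, binv]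
    simp only [mul_assoc]
    rw [← hbr', ha', hb']
  funext k
  by_cases hk0 : (k : ℕ) = (i : ℕ)
  · have hk : k = ⟨(i : ℕ), by have := i.isLt; omega⟩ := Fin.ext hk0
    rw [hk]
    simp only [hurwitzTwist_at_i, hurwitzTwist_at_i1, ← haa, ← hbb]
    rw [F1, F2]
  · by_cases hk1 : (k : ℕ) = (i : ℕ) + 1
    · have hk : k = ⟨(i : ℕ) + 1, by have := i.isLt; omega⟩ := Fin.ext hk1
      rw [hk]
      simp only [hurwitzTwist_at_i, hurwitzTwist_at_i1, ← haa, ← hbb]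
      rw [F1]
    · rw [hurwitzTwist_at_other i _ k hk0 hk1, hurwitzTwist_at_other i _ k hk0 hk1,
        hurwitzTwist_at_other i _ k hk0 hk1]
end

section
/- Let n ≥ 2 and let ρ ∈ C^n, and let a = #{i : 2 ≤ i ≤ n−1 and ρ_i = (1 4)}. Then the boundary monodromy μ(ρ) equals: the identity if n is even and a is even; (1 4)(2 3) if n is even and a is odd; (2 3) if n is odd and a is even; and (1 4) if n is odd and a is odd. -/
open Equiv

lemma aux_tupleProd (n : ℕ) (hn : 2 ≤ n) (ρ : Fin n → Perm (Fin 4))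
    (h1 : ∀ i : Fin n, (i : ℕ) < 2 → ρ i = Equiv.swap 0 1)
    (h2 : ∀ i : Fin n, 2 ≤ (i : ℕ) → ρ i = Equiv.swap 1 2 ∨ ρ i = Equiv.swap 0 3) :
    tupleProd ρ =
      (if Even (n + (Finset.univ.filter
          (fun i : Fin n => 2 ≤ (i : ℕ) ∧ ρ i = Equiv.swap 0 3)).card) then 1
        else Equiv.swap 1 2) *
      (if Even (Finset.univ.filter
          (fun i : Fin n => 2 ≤ (i : ℕ) ∧ ρ i = Equiv.swap 0 3)).card then 1
        else Equiv.swap 0 3) := by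
  induction n with
  | zero => omega
  | succ n ih =>
    by_cases hsmall : n < 2
    · have hn1 : n = 1 := by omega
      subst hn1
      have h0 : ρ 0 = Equiv.swap 0 1 := h1 0 (by norm_num)
      have h1' : ρ 1 = Equiv.swap 0 1 := h1 1 (by norm_num)
      have hc : (Finset.univ.filter
          (fun i : Fin 2 => 2 ≤ (i : ℕ) ∧ ρ i = Equiv.swap 0 3)).card = 0 := by
        rw [Finset.card_eq_zero, Finset.filter_eq_empty_iff]
        rintro i - ⟨hi, -⟩
        have := i.isLt; omega
      rw [hc]
      simp [tupleProd, List.ofFn_succ, h0, h1']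
    · have hn2 : 2 ≤ n := by omega
      set ρ' : Fin n → Perm (Fin 4) := fun i => ρ i.castSucc with hρ'
      have key := ih hn2 ρ'
        (fun i hi => h1 i.castSucc (by simpa using hi))
        (fun i hi => h2 i.castSucc (by simpa using hi))
      have hprod : tupleProd ρ = tupleProd ρ' * ρ (Fin.last n) := by
        rw [tupleProd, tupleProd, List.ofFn_succ', List.concat_eq_append,
          List.prod_append, List.prod_cons, List.prod_nil, mul_one]
      set a' := (Finset.univ.filter
          (fun i : Fin n => 2 ≤ (i : ℕ) ∧ ρ' i = Equiv.swap 0 3)).card with ha'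
      have hcard : (Finset.univ.filter
          (fun i : Fin (n+1) => 2 ≤ (i : ℕ) ∧ ρ i = Equiv.swap 0 3)).card =
          a' + (if 2 ≤ ((Fin.last n : Fin (n+1)) : ℕ) ∧ ρ (Fin.last n) = Equiv.swap 0 3
            then 1 else 0) := by
        classical
        rw [ha', Finset.card_filter, Finset.card_filter, Fin.sum_univ_castSucc]
        simp [hρ']
      have hlast : ρ (Fin.last n) = Equiv.swap 1 2 ∨ ρ (Fin.last n) = Equiv.swap 0 3 :=
        h2 (Fin.last n) (by simpa using hn2)
      have hne : Equiv.swap (1 : Fin 4) 2 ≠ Equiv.swap 0 3 := by decide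
      rcases hlast with hl | hl
      · have hc0 : (Finset.univ.filter
            (fun i : Fin (n+1) => 2 ≤ (i : ℕ) ∧ ρ i = Equiv.swap 0 3)).card = a' := by
          rw [hcard, if_neg, add_zero]
          rintro ⟨-, h⟩; rw [hl] at h; exact hne h
        rw [hprod, key, hc0, hl, show n + 1 + a' = (n + a') + 1 from by omega]
        simp only [Nat.even_add_one]
        by_cases hA : Even a' <;> by_cases hB : Even (n + a') <;>
          simp [hA, hB] <;> decide
      · have hc0 : (Finset.univ.filter
            (fun i : Fin (n+1) => 2 ≤ (i : ℕ) ∧ ρ i = Equiv.swap 0 3)).card = a' + 1 := by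
          rw [hcard, if_pos ⟨by simpa using hn2, hl⟩]
        rw [hprod, key, hc0, hl, show n + 1 + (a' + 1) = (n + a') + 2 from by omega]
        have h2e : Even ((n + a') + 2) ↔ Even (n + a') := by
          constructor <;> intro h
          · rcases h with ⟨k, hk⟩; exact ⟨k - 1, by omega⟩
          · exact h.add (by decide)
        simp only [h2e, Nat.even_add_one]
        by_cases hA : Even a' <;> by_cases hB : Even (n + a') <;>
          simp [hA, hB] <;> decide

/-- The boundary monodromy of `ρ ∈ C^n` in terms of the parities of `n` and of the number
`a` of entries equal to `(1 4)`. -/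
theorem stmt18 (n : ℕ) (hn : 2 ≤ n) (ρ : Fin n → Perm (Fin 4)) (hρ : ρ ∈ Cset n)
    (a : ℕ)
    (ha : a = (Finset.univ.filter
      (fun i : Fin n => 2 ≤ (i : ℕ) ∧ ρ i = Equiv.swap 0 3)).card) :
    (Even n → Even a → tupleProd ρ = 1) ∧
    (Even n → ¬ Even a → tupleProd ρ = Equiv.swap 0 3 * Equiv.swap 1 2) ∧
    (¬ Even n → Even a → tupleProd ρ = Equiv.swap 1 2) ∧
    (¬ Even n → ¬ Even a → tupleProd ρ = Equiv.swap 0 3) := by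
  obtain ⟨h1, h2, -⟩ := hρ
  subst ha
  rw [aux_tupleProd n hn ρ h1 h2]
  refine ⟨fun he ha => ?_, fun he ha => ?_, fun he ha => ?_, fun he ha => ?_⟩ <;>
    simp [Nat.even_add, he, ha] <;> decide
end
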